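/- Let F be an anti-invariant Riemannian submersion from a Sasakian manifold with (ker F_*)^⊥ = φ(ker F_*) ⊕ span{ξ}. Then ker F_* defines a totally geodesic foliation on M if and only if T_V φW = 0 for all vertical vector fields V, W, where T is the O'Neill tensor. -/

import Mathlib

/-- Algebraic model of a Riemannian submersion `F : (M,g_M) → (N,g_N)`:
`Fn` plays the role of smooth functions on `M`, `VF` of vector fields on `M`,
`g` is the metric, `der` the directional derivative, `nabla` the Levi-Civita
connection, `bracket` the Lie bracket, and `vert`/`horiz` the projections onto
the vertical distribution `ker F_*` and the horizontal distribution
`(ker F_*)^⊥` determined by the fibers of the submersion. -/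
structure RiemannianSubmersionData (Fn VF : Type) [CommRing Fn] [Algebra ℝ Fn]
    [AddCommGroup VF] [Module Fn VF] where
  g : VF → VF → Fn
  g_symm : ∀ X Y, g X Y = g Y X
  g_add_left : ∀ X Y Z, g (X + Y) Z = g X Z + g Y Z
  g_smul_left : ∀ (f : Fn) (X Y : VF), g (f • X) Y = f * g X Y
  g_nondeg : ∀ X, (∀ Y, g X Y = 0) → X = 0
  der : VF → Fn → Fn
  der_add : ∀ X f₁ f₂, der X (f₁ + f₂) = der X f₁ + der X f₂
  der_mul : ∀ X f₁ f₂, der X (f₁ * f₂) = f₁ * der X f₂ + f₂ * der X f₁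
  bracket : VF → VF → VF
  nabla : VF → VF → VF
  nabla_add_left : ∀ X Y Z, nabla (X + Y) Z = nabla X Z + nabla Y Z
  nabla_add_right : ∀ X Y Z, nabla X (Y + Z) = nabla X Y + nabla X Z
  nabla_smul_left : ∀ (f : Fn) (X Y : VF), nabla (f • X) Y = f • nabla X Y
  nabla_smul_right : ∀ (f : Fn) (X Y : VF),
    nabla X (f • Y) = f • nabla X Y + der X f • Y
  torsion_free : ∀ X Y, nabla X Y - nabla Y X = bracket X Y
  compat : ∀ X Y Z, der X (g Y Z) = g (nabla X Y) Z + g Y (nabla X Z)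
  vert : VF → VF
  horiz : VF → VF
  vert_add : ∀ X Y, vert (X + Y) = vert X + vert Y
  vert_smul : ∀ (f : Fn) (X : VF), vert (f • X) = f • vert X
  horiz_add : ∀ X Y, horiz (X + Y) = horiz X + horiz Y
  horiz_smul : ∀ (f : Fn) (X : VF), horiz (f • X) = f • horiz X
  vert_add_horiz : ∀ X, vert X + horiz X = X
  vert_vert : ∀ X, vert (vert X) = vert X
  vert_horiz : ∀ X, vert (horiz X) = 0
  horiz_vert : ∀ X, horiz (vert X) = 0
  g_vert_horiz : ∀ X Y, g (vert X) (horiz Y) = 0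
  vert_bracket : ∀ X Y, vert X = X → vert Y = Y → vert (bracket X Y) = bracket X Y

namespace RiemannianSubmersionData

variable {Fn VF : Type} [CommRing Fn] [Algebra ℝ Fn] [AddCommGroup VF] [Module Fn VF]

/-- O'Neill tensor `T_E F = H∇_{VE}(VF) + V∇_{VE}(HF)`. -/
def T (S : RiemannianSubmersionData Fn VF) (E F : VF) : VF :=
  S.horiz (S.nabla (S.vert E) (S.vert F)) + S.vert (S.nabla (S.vert E) (S.horiz F))

/-- O'Neill tensor `A_E F = V∇_{HE}(HF) + H∇_{HE}(VF)`. -/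
def A (S : RiemannianSubmersionData Fn VF) (E F : VF) : VF :=
  S.vert (S.nabla (S.horiz E) (S.horiz F)) + S.horiz (S.nabla (S.horiz E) (S.vert F))

end RiemannianSubmersionData

/-- A Riemannian submersion from a Sasakian manifold `M(φ,ξ,η,g)` onto a
Riemannian manifold: the total space carries an almost contact metric structure
`(phi, xi, eta, g)` satisfying the Sasakian condition
`(∇_X φ)Y = g(X,Y)ξ - η(Y)X` (and hence `R(ξ,X)Y = g(X,Y)ξ - η(Y)X`). -/
structure SasakianSubmersionData (Fn VF : Type) [CommRing Fn] [Algebra ℝ Fn]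
    [AddCommGroup VF] [Module Fn VF] extends RiemannianSubmersionData Fn VF where
  phi : VF → VF
  xi : VF
  eta : VF → Fn
  phi_add : ∀ X Y, phi (X + Y) = phi X + phi Y
  phi_smul : ∀ (f : Fn) (X : VF), phi (f • X) = f • phi X
  eta_add : ∀ X Y, eta (X + Y) = eta X + eta Y
  eta_smul : ∀ (f : Fn) (X : VF), eta (f • X) = f * eta X
  phi_phi : ∀ X, phi (phi X) = -X + eta X • xi
  phi_xi : phi xi = 0
  eta_phi : ∀ X, eta (phi X) = 0
  eta_xi : eta xi = 1
  g_phi : ∀ X Y, g (phi X) (phi Y) = g X Y - eta X * eta Y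
  eta_g : ∀ X, eta X = g X xi
  sasaki : ∀ X Y, nabla X (phi Y) - phi (nabla X Y) = g X Y • xi - eta Y • X
  curv_xi : ∀ X Y, nabla xi (nabla X Y) - nabla X (nabla xi Y)
      - nabla (bracket xi X) Y = g X Y • xi - eta Y • X

namespace SasakianSubmersionData

variable {Fn VF : Type} [CommRing Fn] [Algebra ℝ Fn] [AddCommGroup VF] [Module Fn VF]

/-- Vertical part `BX` of `φX` for horizontal `X`. -/
def B (S : SasakianSubmersionData Fn VF) (X : VF) : VF := S.vert (S.phi X)

/-- Horizontal (`μ`-)part `CX` of `φX` for horizontal `X`. -/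
def C (S : SasakianSubmersionData Fn VF) (X : VF) : VF := S.horiz (S.phi X)

/-- O'Neill tensor `T`. -/
def T (S : SasakianSubmersionData Fn VF) : VF → VF → VF :=
  S.toRiemannianSubmersionData.T

/-- O'Neill tensor `A`. -/
def A (S : SasakianSubmersionData Fn VF) : VF → VF → VF :=
  S.toRiemannianSubmersionData.A

/-- `F` is anti-invariant: `φ(ker F_*) ⊆ (ker F_*)^⊥`. -/
def AntiInvariant (S : SasakianSubmersionData Fn VF) : Prop :=
  ∀ U, S.vert U = U → S.horiz (S.phi U) = S.phi U

end SasakianSubmersionData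

namespace SasakianSubmersionData

variable {Fn VF : Type} [CommRing Fn] [Algebra ℝ Fn] [AddCommGroup VF] [Module Fn VF]
variable (S : SasakianSubmersionData Fn VF)

lemma g_zero_left (X : VF) : S.g 0 X = 0 := by
  have h := S.g_add_left 0 0 X
  rw [add_zero] at h
  exact left_eq_add.mp h

lemma g_zero_right (X : VF) : S.g X 0 = 0 := by
  rw [S.g_symm]; exact S.g_zero_left X

lemma g_add_right (X Y Z : VF) : S.g X (Y + Z) = S.g X Y + S.g X Z := by
  rw [S.g_symm, S.g_add_left, S.g_symm Y X, S.g_symm Z X]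

lemma g_smul_right (f : Fn) (X Y : VF) : S.g X (f • Y) = f * S.g X Y := by
  rw [S.g_symm, S.g_smul_left, S.g_symm]

lemma g_neg_right (X Y : VF) : S.g X (-Y) = -S.g X Y := by
  have h : S.g X (-Y) + S.g X Y = 0 := by
    rw [← S.g_add_right, neg_add_cancel, S.g_zero_right]
  exact eq_neg_of_add_eq_zero_left h

lemma nabla_zero_right (X : VF) : S.nabla X 0 = 0 := by
  have h := S.nabla_add_right X 0 0
  rw [add_zero] at h
  exact left_eq_add.mp h

lemma der_zero (X : VF) : S.der X 0 = 0 := by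
  have h := S.der_add X 0 0
  rw [add_zero] at h
  exact left_eq_add.mp h

lemma vert_zero' : S.vert (0 : VF) = 0 := by
  have h := S.vert_smul 0 0
  rwa [zero_smul, zero_smul] at h

lemma horiz_zero' : S.horiz (0 : VF) = 0 := by
  have h := S.horiz_smul 0 0
  rwa [zero_smul, zero_smul] at h

lemma horiz_horiz' (X : VF) : S.horiz (S.horiz X) = S.horiz X := by
  have h := S.vert_add_horiz (S.horiz X)
  rwa [S.vert_horiz, zero_add] at h

lemma g_vh (X Y : VF) (hX : S.vert X = X) (hY : S.horiz Y = Y) : S.g X Y = 0 := by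
  rw [← hX, ← hY]; exact S.g_vert_horiz X Y

lemma g_hv (X Y : VF) (hX : S.horiz X = X) (hY : S.vert Y = Y) : S.g X Y = 0 := by
  rw [S.g_symm]; exact S.g_vh Y X hY hX

/-- φ is skew-symmetric with respect to g. -/
lemma g_phi_skew (A U : VF) : S.g A (S.phi U) = -S.g (S.phi A) U := by
  have h1 := S.g_phi A (S.phi U)
  rw [S.eta_phi U, mul_zero, sub_zero, S.phi_phi U] at h1
  rw [S.g_add_right, S.g_neg_right, S.g_smul_right] at h1
  have hx : S.g (S.phi A) S.xi = 0 := by rw [← S.eta_g]; exact S.eta_phi A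
  rw [hx, mul_zero, add_zero] at h1
  exact h1.symm

end SasakianSubmersionData

open SasakianSubmersionData in
/-- Corollary 3: for an anti-invariant Riemannian submersion from a Sasakian
manifold with `(ker F_*)^⊥ = φ(ker F_*) ⊕ span{ξ}`, the vertical distribution
`ker F_*` defines a totally geodesic foliation on `M` iff `T_V φW = 0` for all
vertical `V, W`. -/
theorem vertical_totally_geodesic_iff {Fn VF : Type} [CommRing Fn]
    [Algebra ℝ Fn] [AddCommGroup VF] [Module Fn VF]
    (S : SasakianSubmersionData Fn VF)
    (hxi : S.horiz S.xi = S.xi)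
    (hanti : S.AntiInvariant)
    (hspan : ∀ X, S.horiz X = X →
      ∃ (U : VF) (c : Fn), S.vert U = U ∧ X = S.phi U + c • S.xi) :
    (∀ V W, S.vert V = V → S.vert W = W →
        S.vert (S.nabla V W) = S.nabla V W) ↔
      (∀ V W, S.vert V = V → S.vert W = W → S.T V (S.phi W) = 0) := by
  classical
  have hvertxi : S.vert S.xi = 0 := by rw [← hxi]; exact S.vert_horiz S.xi
  have hetaV : ∀ V, S.vert V = V → S.eta V = 0 := fun V hV => by
    rw [S.eta_g]; exact S.g_vh V S.xi hV hxi
  -- T V (φ W) = vert (φ (∇_V W)) for vertical V, W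
  have hT : ∀ V W, S.vert V = V → S.vert W = W →
      S.T V (S.phi W) = S.vert (S.phi (S.nabla V W)) := by
    intro V W hV hW
    have h1 : S.vert (S.phi W) = 0 := by
      rw [← hanti W hW]; exact S.vert_horiz _
    have hs := S.sasaki V W
    have hnab : S.nabla V (S.phi W) = S.phi (S.nabla V W) +
        (S.g V W • S.xi - S.eta W • V) := by
      rw [← hs]; abel
    show S.horiz (S.nabla (S.vert V) (S.vert (S.phi W))) +
        S.vert (S.nabla (S.vert V) (S.horiz (S.phi W))) =
      S.vert (S.phi (S.nabla V W))
    rw [hV, h1, S.nabla_zero_right, S.horiz_zero', zero_add, hanti W hW, hnab,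
      hetaV W hW, zero_smul, sub_zero, S.vert_add, S.vert_smul, hvertxi,
      smul_zero, add_zero]
  constructor
  · intro h V W hV hW
    rw [hT V W hV hW]
    have hvert := h V W hV hW
    rw [← hanti (S.nabla V W) hvert]
    exact S.vert_horiz _
  · intro h V W hV hW
    have key : S.vert (S.phi (S.nabla V W)) = 0 := by
      rw [← hT V W hV hW]; exact h V W hV hW
    set A := S.nabla V W with hA
    -- g(A, ξ) = 0
    have hnxi : S.phi (S.nabla V S.xi) = V := by
      have hs := S.sasaki V S.xi
      rw [S.phi_xi, S.nabla_zero_right, zero_sub, S.eta_xi, one_smul] at hs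
      have hgvxi : S.g V S.xi = 0 := S.g_vh V S.xi hV hxi
      rw [hgvxi, zero_smul, zero_sub, neg_inj] at hs
      exact hs
    have hgAxi : S.g A S.xi = 0 := by
      have hc := S.compat V W S.xi
      have h0 : S.g W S.xi = 0 := S.g_vh W S.xi hW hxi
      have h2 : S.g W (S.nabla V S.xi) = 0 := by
        have hp := S.g_phi W (S.nabla V S.xi)
        rw [hnxi, hetaV W hW, zero_mul, sub_zero] at hp
        rw [← hp]
        exact S.g_hv _ _ (hanti W hW) hV
      rw [h0, S.der_zero, h2, add_zero] at hc
      exact hc.symm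
    -- g(A, φU) = 0 for vertical U
    have hgAphi : ∀ U, S.vert U = U → S.g A (S.phi U) = 0 := by
      intro U hU
      rw [S.g_phi_skew]
      have : S.g (S.phi A) U = 0 := by
        have hd := S.vert_add_horiz (S.phi A)
        calc S.g (S.phi A) U = S.g (S.vert (S.phi A) + S.horiz (S.phi A)) U := by
              rw [hd]
          _ = S.g (S.vert (S.phi A)) U + S.g (S.horiz (S.phi A)) U := S.g_add_left _ _ _
          _ = 0 := by
              rw [key, S.g_zero_left, S.g_hv _ _ (S.horiz_horiz' _) hU, add_zero]
      rw [this, neg_zero]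
    -- horiz A = 0
    have hHA : S.horiz A = 0 := by
      apply S.g_nondeg
      intro Y
      have hsplit : S.g (S.horiz A) Y = S.g (S.horiz A) (S.vert Y) +
          S.g (S.horiz A) (S.horiz Y) := by
        rw [← S.g_add_right, S.vert_add_horiz]
      obtain ⟨U, c, hU, hXY⟩ := hspan (S.horiz Y) (S.horiz_horiz' Y)
      have hAdec : S.g A (S.phi U + c • S.xi) = S.g (S.vert A) (S.phi U + c • S.xi)
          + S.g (S.horiz A) (S.phi U + c • S.xi) := by
        rw [← S.g_add_left, S.vert_add_horiz]
      have hvA : S.g (S.vert A) (S.phi U + c • S.xi) = 0 := by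
        rw [S.g_add_right, S.g_smul_right,
          S.g_vh _ _ (S.vert_vert A) (hanti U hU),
          S.g_vh _ _ (S.vert_vert A) hxi, mul_zero, add_zero]
      have hAfull : S.g A (S.phi U + c • S.xi) = 0 := by
        rw [S.g_add_right, S.g_smul_right, hgAphi U hU, hgAxi, mul_zero, add_zero]
      have hhA : S.g (S.horiz A) (S.horiz Y) = 0 := by
        have := hAdec
        rw [hAfull, hvA, zero_add] at this
        rw [hXY]
        exact this.symm
      rw [hsplit, hhA, add_zero]
      exact S.g_hv _ _ (S.horiz_horiz' A) (S.vert_vert Y)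
    have hfin := S.vert_add_horiz A
    rwa [hHA, add_zero] at hfin
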